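/- arXiv:1001.4223 — 2 statements merged into one kernel-verified Lean document; each statement's English description precedes it below -/
import Mathlib

section
/- Let u_1, ..., u_{n+1} be unit vectors in R^n satisfying Σ_{i=1}^{n+1} c_i (u_i ⊗ u_i) = I_n and Σ_{i=1}^{n+1} c_i u_i = 0 for positive reals c_i. Define v_i = √(n/(n+1)) · (-u_i, 1/√n) ∈ R^{n+1} and d_i = ((n+1)/n) c_i. Then each v_i is a unit vector in R^{n+1} and Σ_{i=1}^{n+1} d_i (v_i ⊗ v_i) = I_{n+1}. -/
open RealInnerProductSpace

/-- Lifting John's decomposition from R^n to R^{n+1}: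
with v_i = √(n/(n+1))·(-u_i, 1/√n) and d_i = ((n+1)/n)·c_i, each v_i is a unit
vector and Σ d_i v_i ⊗ v_i = I_{n+1}. -/
theorem john_lift (n : ℕ) (hn : 1 ≤ n)
    (u : Fin (n + 1) → EuclideanSpace ℝ (Fin n)) (c : Fin (n + 1) → ℝ)
    (hnorm : ∀ i, ‖u i‖ = 1) (hc : ∀ i, 0 < c i)
    (hI : ∀ x : EuclideanSpace ℝ (Fin n), ∑ i, c i • (⟪x, u i⟫ • u i) = x)
    (hzero : ∑ i, c i • u i = 0)
    (v : Fin (n + 1) → EuclideanSpace ℝ (Fin (n + 1)))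
    (hv : ∀ i (j : Fin (n + 1)), v i j =
      if h : (j : ℕ) < n then Real.sqrt ((n : ℝ) / (n + 1)) * (-(u i ⟨j, h⟩))
      else Real.sqrt ((n : ℝ) / (n + 1)) * (1 / Real.sqrt n))
    (d : Fin (n + 1) → ℝ) (hd : ∀ i, d i = ((n : ℝ) + 1) / n * c i) :
    (∀ i, ‖v i‖ = 1) ∧
      ∀ x : EuclideanSpace ℝ (Fin (n + 1)), ∑ i, d i • (⟪x, v i⟫ • v i) = x := by

  have hn0 : (0:ℝ) < n := by exact_mod_cast hn
  have hn1 : (0:ℝ) < (n:ℝ) + 1 := by positivity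
  set s : ℝ := Real.sqrt n with hs
  have hs0 : 0 < s := Real.sqrt_pos.mpr hn0
  have hs2 : s ^ 2 = n := Real.sq_sqrt hn0.le
  have hss : s * s = (n:ℝ) := by rw [← sq]; exact hs2
  set α : ℝ := Real.sqrt ((n:ℝ)/(n+1)) with hα
  have hα2 : α ^ 2 = (n:ℝ) / (n+1) := Real.sq_sqrt (by positivity)
  have hαα : α * α = (n:ℝ) / (n+1) := by rw [← sq]; exact hα2
  have hinner : ∀ m (a b : EuclideanSpace ℝ (Fin m)), ⟪a,b⟫ = ∑ j, a j * b j := by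
    intro m a b; simp [PiLp.inner_apply, RCLike.inner_apply]; exact Finset.sum_congr rfl (fun _ _ => mul_comm _ _)
  have hvc : ∀ i (j : Fin n), v i (Fin.castSucc j) = α * (-(u i j)) := by
    intro i j
    rw [hv, dif_pos (show ((Fin.castSucc j : Fin (n+1)) : ℕ) < n from j.isLt)]
    simp
  have hvl : ∀ i, v i (Fin.last n) = α * (1/s) := by
    intro i
    rw [hv, dif_neg (by simp)]
  have hu2 : ∀ i, ∑ j, u i j ^ 2 = 1 := by
    intro i
    have h1 : ⟪u i, u i⟫ = 1 := by
      rw [real_inner_self_eq_norm_sq, hnorm i]; norm_num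
    rw [hinner] at h1
    simpa [sq] using h1
  have hIc : ∀ (y : EuclideanSpace ℝ (Fin n)) (j : Fin n),
      ∑ i, c i * (⟪y, u i⟫ * u i j) = y j := by
    intro y j
    have h2 : (∑ i, c i • (⟪y, u i⟫ • u i)) j = y j := by rw [hI y]
    rw [WithLp.ofLp_sum, Finset.sum_apply] at h2
    simpa [mul_assoc] using h2
  have hzc : ∀ j : Fin n, ∑ i, c i * u i j = 0 := by
    intro j
    have h2 : (∑ i, c i • u i) j = (0 : EuclideanSpace ℝ (Fin n)) j := by rw [hzero]
    rw [WithLp.ofLp_sum, Finset.sum_apply] at h2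
    simpa using h2
  have hzi : ∀ y : EuclideanSpace ℝ (Fin n), ∑ i, c i * ⟪y, u i⟫ = 0 := by
    intro y
    have h0 : ⟪y, ∑ i, c i • u i⟫ = 0 := by rw [hzero]; simp
    rw [inner_sum] at h0
    simp only [real_inner_smul_right] at h0
    exact h0
  have hcsum : ∑ i, c i = n := by
    have h1 : ∀ j : Fin n, ∑ i, c i * (u i j)^2 = 1 := by
      intro j
      have h := hIc (EuclideanSpace.single j 1) j
      simp only [EuclideanSpace.inner_single_left, EuclideanSpace.single_apply] at h
      simpa [sq, mul_assoc] using h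
    have h2 : ∑ j : Fin n, ∑ i, c i * (u i j)^2 = n := by simp [h1]
    rw [Finset.sum_comm] at h2
    have h3 : ∀ i, ∑ j : Fin n, c i * (u i j)^2 = c i := by
      intro i; rw [← Finset.mul_sum, hu2, mul_one]
    rw [Finset.sum_congr rfl (fun i _ => h3 i)] at h2
    exact h2
  constructor
  · intro i
    have hsum : ∑ j : Fin (n+1), v i j ^ 2 = 1 := by
      rw [Fin.sum_univ_castSucc]
      simp only [hvc, hvl]
      have h4 : ∑ j : Fin n, (α * -(u i j))^2 = α^2 * ∑ j, u i j ^2 := by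
        rw [Finset.mul_sum]; congr 1; ext j; ring
      rw [h4, hu2, mul_pow, hα2, div_pow, one_pow, hs2]
      field_simp
    rw [EuclideanSpace.norm_eq]
    simp only [Real.norm_eq_abs, sq_abs]
    rw [hsum, Real.sqrt_one]
  · intro x
    set y : EuclideanSpace ℝ (Fin n) := WithLp.toLp 2 (fun j => x (Fin.castSucc j)) with hy
    set t : ℝ := x (Fin.last n) with ht
    have hxv : ∀ i, ⟪x, v i⟫ = α * (-⟪y, u i⟫ + t / s) := by
      intro i
      rw [hinner, Fin.sum_univ_castSucc]
      simp only [hvc, hvl, hinner]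
      have h5 : ∀ j : Fin n, x (Fin.castSucc j) * (α * -(u i j))
          = -(α * (y j * u i j)) := fun j => by
        show y j * (α * -(u i j)) = -(α * (y j * u i j)); ring
      rw [Finset.sum_congr rfl (fun j _ => h5 j)]
      rw [show ∑ j : Fin n, -(α * (y j * u i j)) = -(α * ∑ j, y j * u i j) by
        rw [Finset.mul_sum, Finset.sum_neg_distrib]]
      field_simp
      ring
    ext j
    have happ : (∑ i, d i • (⟪x, v i⟫ • v i)) j = ∑ i, d i * (⟪x, v i⟫ * v i j) := by
      rw [WithLp.ofLp_sum, Finset.sum_apply]; rfl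
    rw [happ]
    induction j using Fin.lastCases with
    | last =>
      have key : ∀ i, d i * (⟪x, v i⟫ * v i (Fin.last n))
          = -(1/s) * (c i * ⟪y, u i⟫) + (t / (s*s)) * c i := by
        intro i
        rw [hxv, hvl, hd]
        calc ((n:ℝ)+1)/n * c i * (α * (-⟪y, u i⟫ + t / s) * (α * (1/s)))
            = ((n:ℝ)+1)/n * c i * ((α*α) * ((-⟪y, u i⟫ + t / s) * (1/s))) := by ring
          _ = ((n:ℝ)+1)/n * c i * ((n/(n+1)) * ((-⟪y, u i⟫ + t / s) * (1/s))) := by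
              rw [hαα]
          _ = -(1/s) * (c i * ⟪y, u i⟫) + (t / (s*s)) * c i := by
              field_simp
      rw [Finset.sum_congr rfl (fun i _ => key i)]
      rw [Finset.sum_add_distrib, ← Finset.mul_sum, ← Finset.mul_sum, hzi, hcsum, hss]
      field_simp
      simp [ht]
    | cast j =>
      have key : ∀ i, d i * (⟪x, v i⟫ * v i (Fin.castSucc j))
          = c i * (⟪y, u i⟫ * u i j) + (-(t/s)) * (c i * u i j) := by
        intro i
        rw [hxv, hvc, hd]
        calc ((n:ℝ)+1)/n * c i * (α * (-⟪y, u i⟫ + t / s) * (α * -(u i j)))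
            = ((n:ℝ)+1)/n * c i * ((α*α) * ((-⟪y, u i⟫ + t / s) * -(u i j))) := by ring
          _ = ((n:ℝ)+1)/n * c i * ((n/(n+1)) * ((-⟪y, u i⟫ + t / s) * -(u i j))) := by
              rw [hαα]
          _ = c i * (⟪y, u i⟫ * u i j) + (-(t/s)) * (c i * u i j) := by
              field_simp
              ring
      rw [Finset.sum_congr rfl (fun i _ => key i)]
      rw [Finset.sum_add_distrib, hIc y j, ← Finset.mul_sum, hzc j]
      simp [hy]
end

section
/- The volume of a regular n-simplex in R^n whose inscribed ball is the unit ball equals √(n^n (n+1)^{n+1}) / n!. -/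
open RealInnerProductSpace MeasureTheory Set Pointwise

noncomputable section



def corner (n : ℕ) (t : ℝ) : Set (Fin n → ℝ) :=
  {y | (∀ i, 0 ≤ y i) ∧ ∑ i, y i ≤ t}

lemma corner_empty {n : ℕ} {t : ℝ} (ht : t < 0) : corner n t = ∅ := by
  ext y
  simp only [corner, mem_setOf_eq, mem_empty_iff_false, iff_false, not_and]
  intro hy hsum
  have : (0:ℝ) ≤ ∑ i, y i := Finset.sum_nonneg fun i _ => hy i
  linarith

lemma measurable_sum_pi (n : ℕ) : Measurable (fun y : Fin n → ℝ => ∑ i, y i) :=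
  Finset.measurable_sum _ fun i _ => measurable_pi_apply i

lemma measurableSet_corner (n : ℕ) (t : ℝ) : MeasurableSet (corner n t) := by
  unfold corner
  simp only [setOf_and, setOf_forall]
  exact MeasurableSet.inter
    (MeasurableSet.iInter fun i => measurableSet_le measurable_const (measurable_pi_apply i))
    (measurableSet_le (measurable_sum_pi n) measurable_const)

lemma volume_corner (n : ℕ) : ∀ t : ℝ, 0 ≤ t →
    volume (corner n t) = ENNReal.ofReal (t ^ n / n.factorial) := by
  induction n with
  | zero =>
    intro t ht
    have : corner 0 t = univ := by
      ext y; simp [corner, ht]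
    rw [this, volume_pi, Measure.pi_univ]
    norm_num
  | succ n ih =>
    intro t ht
    -- use the equivalence (Fin (n+1) → ℝ) ≃ ℝ × (Fin n → ℝ)
    set e := MeasurableEquiv.piFinSuccAbove (fun _ : Fin (n+1) => ℝ) 0 with he
    have hmp : MeasurePreserving e volume (volume.prod volume) := by
      have := measurePreserving_piFinSuccAbove (fun _ : Fin (n+1) => (volume : Measure ℝ)) 0
      exact this
    set T : Set (ℝ × (Fin n → ℝ)) :=
      {p | 0 ≤ p.1 ∧ (∀ i, 0 ≤ p.2 i) ∧ p.1 + ∑ i, p.2 i ≤ t} with hT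
    have hTm : MeasurableSet T := by
      rw [hT]
      simp only [setOf_and, setOf_forall]
      refine MeasurableSet.inter (measurableSet_le measurable_const measurable_fst)
        (MeasurableSet.inter
          (MeasurableSet.iInter fun i =>
            measurableSet_le measurable_const (measurable_snd.eval))
          (measurableSet_le (measurable_fst.add ((measurable_sum_pi n).comp measurable_snd))
            measurable_const))
    have hpre : corner (n+1) t = e ⁻¹' T := by
      ext y
      simp only [corner, mem_setOf_eq, mem_preimage, he,
        MeasurableEquiv.piFinSuccAbove_apply, hT]
      constructor
      · rintro ⟨h0, hs⟩
        refine ⟨h0 0, fun i => h0 _, ?_⟩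
        rw [Fin.sum_univ_succAbove y 0] at hs
        exact hs
      · rintro ⟨h1, h2, h3⟩
        constructor
        · intro i
          rcases Fin.eq_zero_or_eq_succ i with rfl | ⟨j, rfl⟩
          · exact h1
          · have := h2 j
            exact this
        · rw [Fin.sum_univ_succAbove y 0]
          exact h3
    rw [hpre, hmp.measure_preimage hTm.nullMeasurableSet]
    rw [Measure.prod_apply hTm]
    have hslice : ∀ a : ℝ, Prod.mk a ⁻¹' T =
        if 0 ≤ a then corner n (t - a) else ∅ := by
      intro a
      split_ifs with ha
      · ext y; simp only [mem_preimage, hT, mem_setOf_eq, corner]; constructor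
        · rintro ⟨_, h2, h3⟩; exact ⟨h2, by linarith⟩
        · rintro ⟨h2, h3⟩; exact ⟨ha, h2, by linarith⟩
      · ext y; simp only [mem_preimage, hT, mem_setOf_eq, mem_empty_iff_false, iff_false]
        rintro ⟨h1, _, _⟩; exact ha h1
    have hfun : ∀ a : ℝ, volume (Prod.mk a ⁻¹' T) =
        (Icc (0:ℝ) t).indicator (fun a => ENNReal.ofReal ((t - a) ^ n / n.factorial)) a := by
      intro a
      rw [hslice a]
      rcases le_or_gt 0 a with ha | ha
      · rcases le_or_gt a t with hat | hat
        · rw [if_pos ha, ih (t - a) (by linarith),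
            indicator_of_mem (mem_Icc.2 ⟨ha, hat⟩)]
        · rw [if_pos ha, corner_empty (by linarith),
            indicator_of_notMem (by simp [mem_Icc]; intro; linarith)]
          simp
      · rw [if_neg (not_le.2 ha), indicator_of_notMem (by simp [mem_Icc]; intro h; linarith)]
        simp
    calc ∫⁻ a, volume (Prod.mk a ⁻¹' T)
        = ∫⁻ a, (Icc (0:ℝ) t).indicator
            (fun a => ENNReal.ofReal ((t - a) ^ n / n.factorial)) a := by
          exact lintegral_congr hfun
      _ = ∫⁻ a in Icc (0:ℝ) t, ENNReal.ofReal ((t - a) ^ n / n.factorial) := by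
          rw [lintegral_indicator measurableSet_Icc]
      _ = ENNReal.ofReal (∫ a in Icc (0:ℝ) t, (t - a) ^ n / n.factorial) := by
          rw [← ofReal_integral_eq_lintegral_ofReal]
          · apply ContinuousOn.integrableOn_Icc
            fun_prop
          · filter_upwards [ae_restrict_mem measurableSet_Icc] with a ha
            simp only [mem_Icc] at ha
            have h1 : (0:ℝ) ≤ t - a := by linarith [ha.2]
            positivity
      _ = ENNReal.ofReal (t ^ (n+1) / (n+1).factorial) := by
          congr 1
          rw [integral_Icc_eq_integral_Ioc, ← intervalIntegral.integral_of_le ht]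
          have : ∀ a ∈ Set.uIcc (0:ℝ) t, (t - a) ^ n / n.factorial
              = (1 / n.factorial) * (t - a)^n := by intros; ring
          rw [intervalIntegral.integral_congr this, intervalIntegral.integral_const_mul,
            intervalIntegral.integral_comp_sub_left (fun x => x ^ n) t, sub_zero, sub_self,
            integral_pow, Nat.factorial_succ, zero_pow (Nat.succ_ne_zero n), sub_zero]
          push_cast
          field_simp

variable {n : ℕ}

lemma volume_euclidean_eq (s : Set (EuclideanSpace ℝ (Fin n))) (hs : MeasurableSet s) :
    volume s = volume ((WithLp.toLp 2 : (Fin n → ℝ) → EuclideanSpace ℝ (Fin n)) ⁻¹' s) := by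
  have := MeasurePreserving.measure_preimage
    (PiLp.volume_preserving_toLp (Fin n))
    (s := s) (hs.nullMeasurableSet)
  exact this.symm



variable {n : ℕ}

/-- inner product of two edge vectors from a common vertex of a regular simplex -/
lemma reg_inner {m : ℕ} (A : Fin m → EuclideanSpace ℝ (Fin n)) (σ : ℝ)
    (hd : ∀ i j, i ≠ j → ⟪A i - A j, A i - A j⟫ = σ)
    {i j k : Fin m} (hij : i ≠ j) (hik : i ≠ k) (hjk : j ≠ k) :
    ⟪A i - A j, A i - A k⟫ = σ / 2 := by
  have h1 : ‖A i - A j‖ ^ 2 = σ := by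
    rw [← real_inner_self_eq_norm_sq]; exact hd i j hij
  have h2 : ‖A i - A k‖ ^ 2 = σ := by
    rw [← real_inner_self_eq_norm_sq]; exact hd i k hik
  have h3 : ‖(A i - A j) - (A i - A k)‖ ^ 2 = σ := by
    have : (A i - A j) - (A i - A k) = A k - A j := by abel
    rw [this, ← real_inner_self_eq_norm_sq]; exact hd k j hjk.symm
  have := norm_sub_sq_real (A i - A j) (A i - A k)
  rw [h1, h2, h3] at this
  linarith

lemma sum_sub_centroid (A : Fin (n+1) → EuclideanSpace ℝ (Fin n)) :
    ∑ j, (A j - (((n:ℝ)+1)⁻¹ • ∑ k, A k)) = 0 := by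
  set c := ((n:ℝ)+1)⁻¹ • ∑ k, A k with hc
  have hcard : (Finset.univ : Finset (Fin (n+1))).card = n + 1 := by simp
  rw [Finset.sum_sub_distrib, Finset.sum_const, hcard]
  have : (n + 1) • c = ((n:ℝ)+1) • c := by
    rw [← Nat.cast_smul_eq_nsmul ℝ]
    norm_num
  rw [this, hc, smul_smul]
  have hne : ((n:ℝ)+1) ≠ 0 := by positivity
  rw [mul_inv_cancel₀ hne, one_smul, sub_self]

lemma centroid_inner_edge (hn : 1 ≤ n) (A : Fin (n+1) → EuclideanSpace ℝ (Fin n)) (σ : ℝ)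
    (hd : ∀ i j, i ≠ j → ⟪A i - A j, A i - A j⟫ = σ)
    {i j : Fin (n+1)} (hij : i ≠ j) :
    ⟪A i - (((n:ℝ)+1)⁻¹ • ∑ k, A k), A j - A i⟫ = -σ/2 := by
  set c := ((n:ℝ)+1)⁻¹ • ∑ k, A k with hc
  have hAc : A i - c = ((n:ℝ)+1)⁻¹ • ∑ k, (A i - A k) := by
    rw [Finset.sum_sub_distrib, smul_sub, Finset.sum_const, Finset.card_univ, Fintype.card_fin,
      hc, ← Nat.cast_smul_eq_nsmul ℝ, smul_smul]
    have hne : ((n:ℝ)+1) ≠ 0 := by positivity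
    rw [show ((n+1 : ℕ) : ℝ) = (n:ℝ)+1 by push_cast; ring, inv_mul_cancel₀ hne, one_smul]
  rw [hAc, real_inner_smul_left, sum_inner]
  have hsplit : ∑ k, ⟪A i - A k, A j - A i⟫ = -((n:ℝ)+1) * σ / 2 := by
    rw [← Finset.add_sum_erase _ _ (Finset.mem_univ i), sub_self, inner_zero_left, zero_add,
      ← Finset.add_sum_erase _ _ (Finset.mem_erase.2 ⟨hij.symm, Finset.mem_univ j⟩)]
    have hj : ⟪A i - A j, A j - A i⟫ = -σ := by
      rw [show A j - A i = -(A i - A j) by abel, inner_neg_right, hd i j hij]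
    have hrest : ∀ k ∈ (Finset.univ.erase i).erase j,
        ⟪A i - A k, A j - A i⟫ = -(σ/2) := by
      intro k hk
      rw [Finset.mem_erase, Finset.mem_erase] at hk
      obtain ⟨hkj, hki, -⟩ := hk
      rw [show A j - A i = -(A i - A j) by abel, inner_neg_right,
        reg_inner A σ hd hki.symm hij (fun h => hkj (h.symm ▸ rfl))]
    rw [Finset.sum_congr rfl hrest, Finset.sum_const]
    have hcard2 : ((Finset.univ.erase i).erase j).card = n - 1 := by
      rw [Finset.card_erase_of_mem (Finset.mem_erase.2 ⟨hij.symm, Finset.mem_univ j⟩),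
        Finset.card_erase_of_mem (Finset.mem_univ i), Finset.card_univ, Fintype.card_fin]
      omega
    rw [hcard2, hj, nsmul_eq_mul]
    have : ((n - 1 : ℕ) : ℝ) = (n:ℝ) - 1 := by
      rw [Nat.cast_sub hn]; norm_num
    rw [this]; ring
  rw [hsplit]
  have hne : ((n:ℝ)+1) ≠ 0 := by positivity
  field_simp

lemma centroid_norm_sq (hn : 1 ≤ n) (A : Fin (n+1) → EuclideanSpace ℝ (Fin n)) (σ : ℝ)
    (hd : ∀ i j, i ≠ j → ⟪A i - A j, A i - A j⟫ = σ) (i : Fin (n+1)) :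
    ⟪A i - (((n:ℝ)+1)⁻¹ • ∑ k, A k), A i - (((n:ℝ)+1)⁻¹ • ∑ k, A k)⟫
      = n * σ / (2 * ((n:ℝ)+1)) := by
  set c := ((n:ℝ)+1)⁻¹ • ∑ k, A k with hc
  set Q := (⟪A i - c, A i - c⟫ : ℝ) with hQ
  have h0 : ∑ j, (⟪A i - c, A j - c⟫ : ℝ) = 0 := by
    rw [← inner_sum, sum_sub_centroid A, inner_zero_right]
  have hsplit : ∑ j, (⟪A i - c, A j - c⟫ : ℝ) = Q + n * (Q - σ/2) := by
    rw [← Finset.add_sum_erase _ _ (Finset.mem_univ i)]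
    have hrest : ∀ j ∈ Finset.univ.erase i,
        (⟪A i - c, A j - c⟫ : ℝ) = Q - σ/2 := by
      intro j hj
      have hji : j ≠ i := (Finset.mem_erase.1 hj).1
      have : A j - c = (A j - A i) + (A i - c) := by abel
      rw [this, inner_add_right, centroid_inner_edge hn A σ hd hji.symm, ← hQ]
      ring
    rw [Finset.sum_congr rfl hrest, Finset.sum_const,
      Finset.card_erase_of_mem (Finset.mem_univ i), Finset.card_univ, Fintype.card_fin,
      nsmul_eq_mul, ← hQ]
    norm_num
  rw [hsplit] at h0
  have hne : ((n:ℝ)+1) ≠ 0 := by positivity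
  show Q = _
  field_simp at h0 ⊢
  linarith

/-- the affine functional `x ↦ ⟪g, x - c⟫ + κ` -/
def innerAff (g c : EuclideanSpace ℝ (Fin n)) (κ : ℝ) :
    EuclideanSpace ℝ (Fin n) →ᵃ[ℝ] ℝ where
  toFun x := ⟪g, x - c⟫ + κ
  linear :=
    { toFun := fun v => ⟪g, v⟫
      map_add' := fun u v => inner_add_right g u v
      map_smul' := fun r v => by
        simp only [RingHom.id_apply, smul_eq_mul]
        exact real_inner_smul_right g v r }
  map_vadd' p v := by
    simp only [vadd_eq_add, smul_eq_mul]
    have : v + p - c = v + (p - c) := by abel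
    rw [this, inner_add_right]
    simp only [LinearMap.coe_mk, AddHom.coe_mk]
    ring

lemma innerAff_apply (g c : EuclideanSpace ℝ (Fin n)) (κ : ℝ) (x : EuclideanSpace ℝ (Fin n)) :
    innerAff g c κ x = ⟪g, x - c⟫ + κ := rfl

def gvec (A : Fin (n+1) → EuclideanSpace ℝ (Fin n)) (σ : ℝ) (i : Fin (n+1)) :
    EuclideanSpace ℝ (Fin n) :=
  (2/σ) • (A i - ((n:ℝ)+1)⁻¹ • ∑ k, A k)

def bary (A : Fin (n+1) → EuclideanSpace ℝ (Fin n)) (σ : ℝ) (i : Fin (n+1)) :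
    EuclideanSpace ℝ (Fin n) →ᵃ[ℝ] ℝ :=
  innerAff (gvec A σ i) (((n:ℝ)+1)⁻¹ • ∑ k, A k) (((n:ℝ)+1))⁻¹

lemma bary_apply (A : Fin (n+1) → EuclideanSpace ℝ (Fin n)) (σ : ℝ) (i : Fin (n+1))
    (x : EuclideanSpace ℝ (Fin n)) :
    bary A σ i x = ⟪gvec A σ i, x - ((n:ℝ)+1)⁻¹ • ∑ k, A k⟫ + ((n:ℝ)+1)⁻¹ := rfl

lemma bary_vertex (hn : 1 ≤ n) (A : Fin (n+1) → EuclideanSpace ℝ (Fin n)) (σ : ℝ)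
    (hσ : σ ≠ 0) (hd : ∀ i j, i ≠ j → ⟪A i - A j, A i - A j⟫ = σ) (i j : Fin (n+1)) :
    bary A σ i (A j) = if i = j then 1 else 0 := by
  have hne : ((n:ℝ)+1) ≠ 0 := by positivity
  rw [bary_apply]
  set c := ((n:ℝ)+1)⁻¹ • ∑ k, A k with hc
  rw [gvec, real_inner_smul_left]
  rcases eq_or_ne i j with rfl | hij
  · rw [if_pos rfl, centroid_norm_sq hn A σ hd i]
    field_simp
  · rw [if_neg hij]
    have hAj : A j - c = (A j - A i) + (A i - c) := by abel
    rw [hAj, inner_add_right, centroid_inner_edge hn A σ hd hij,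
      centroid_norm_sq hn A σ hd i]
    field_simp
    ring

lemma bary_sum (A : Fin (n+1) → EuclideanSpace ℝ (Fin n)) (σ : ℝ)
    (x : EuclideanSpace ℝ (Fin n)) : ∑ i, bary A σ i x = 1 := by
  have hne : ((n:ℝ)+1) ≠ 0 := by positivity
  simp only [bary_apply]
  rw [Finset.sum_add_distrib, Finset.sum_const, Finset.card_univ, Fintype.card_fin]
  have h1 : ∑ i, (⟪gvec A σ i, x - ((n:ℝ)+1)⁻¹ • ∑ k, A k⟫ : ℝ)
      = ⟪∑ i, gvec A σ i, x - ((n:ℝ)+1)⁻¹ • ∑ k, A k⟫ := (sum_inner _ _ _).symm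
  have h2 : ∑ i, gvec A σ i = 0 := by
    simp only [gvec]
    rw [← Finset.smul_sum, sum_sub_centroid A, smul_zero]
  rw [h1, h2, inner_zero_left, zero_add, nsmul_eq_mul]
  push_cast
  field_simp

lemma hull_eq_bary (hn : 1 ≤ n) (A : Fin (n+1) → EuclideanSpace ℝ (Fin n))
    (hA : AffineIndependent ℝ A) (σ : ℝ) (hσ : σ ≠ 0)
    (hd : ∀ i j, i ≠ j → ⟪A i - A j, A i - A j⟫ = σ) :
    convexHull ℝ (Set.range A) = {x | ∀ i, 0 ≤ bary A σ i x} := by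
  have hspan : affineSpan ℝ (Set.range A) = ⊤ := by
    rw [hA.affineSpan_eq_top_iff_card_eq_finrank_add_one]
    simp [finrank_euclideanSpace_fin]
  apply Set.Subset.antisymm
  · apply convexHull_min
    · rintro x ⟨j, rfl⟩ i
      rw [bary_vertex hn A σ hσ hd i j]
      split_ifs <;> norm_num
    · have : {x | ∀ i, 0 ≤ bary A σ i x} = ⋂ i, (bary A σ i) ⁻¹' (Set.Ici 0) := by
        ext x; simp [Set.mem_iInter, Set.mem_preimage]
      rw [this]
      exact convex_iInter fun i => (convex_Ici (0:ℝ)).affine_preimage (bary A σ i)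
  · intro x hx
    have hxspan : x ∈ affineSpan ℝ (Set.range A) := by rw [hspan]; trivial
    obtain ⟨w, hw, rfl⟩ := eq_affineCombination_of_mem_affineSpan_of_fintype hxspan
    have hwi : ∀ i, w i = bary A σ i (Finset.univ.affineCombination ℝ A w) := by
      intro i
      rw [Finset.map_affineCombination _ _ _ hw,
        Finset.affineCombination_eq_linear_combination _ _ _ hw]
      simp only [Function.comp_apply]
      have : ∀ j, w j • bary A σ i (A j) = if j = i then w j else 0 := by
        intro j
        rw [bary_vertex hn A σ hσ hd i j]
        rcases eq_or_ne j i with rfl | hji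
        · rw [if_pos rfl, if_pos rfl, smul_eq_mul, mul_one]
        · rw [if_neg (fun h => hji (h.symm)), if_neg hji, smul_eq_mul, mul_zero]
      rw [Finset.sum_congr rfl (fun j _ => this j), Finset.sum_ite_eq' Finset.univ i w,
        if_pos (Finset.mem_univ i)]
    exact affineCombination_mem_convexHull (fun i _ => (hwi i) ▸ hx i) hw

lemma sigma_eq (hn : 1 ≤ n) (A : Fin (n+1) → EuclideanSpace ℝ (Fin n))
    (hA : AffineIndependent ℝ A) (σ : ℝ) (hσ : 0 < σ)
    (hd : ∀ i j, i ≠ j → ⟪A i - A j, A i - A j⟫ = σ)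
    (hball : Metric.closedBall 0 1 ⊆ convexHull ℝ (Set.range A))
    (hmax : ∀ (z : EuclideanSpace ℝ (Fin n)) (r : ℝ),
      Metric.closedBall z r ⊆ convexHull ℝ (Set.range A) → r ≤ 1) :
    σ = 2 * n * ((n:ℝ) + 1) := by
  have hne : ((n:ℝ)+1) ≠ 0 := by positivity
  have hn' : (0:ℝ) < n := by exact_mod_cast hn
  set c := ((n:ℝ)+1)⁻¹ • ∑ k, A k with hc
  have hgg : ∀ i, (⟪gvec A σ i, gvec A σ i⟫ : ℝ) = 2*n/(σ*((n:ℝ)+1)) := by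
    intro i
    rw [gvec, real_inner_smul_left, real_inner_smul_right, ← hc,
      centroid_norm_sq hn A σ hd i]
    field_simp
  set γ := Real.sqrt (2*n/(σ*((n:ℝ)+1))) with hγ
  have hγ2 : γ^2 = 2*n/(σ*((n:ℝ)+1)) := Real.sq_sqrt (by positivity)
  have hγpos : 0 < γ := Real.sqrt_pos.2 (by positivity)
  have hnorm : ∀ i, ‖gvec A σ i‖ = γ := by
    intro i
    rw [norm_eq_sqrt_real_inner, hgg i]
  have hhull := hull_eq_bary hn A hA σ (ne_of_gt hσ) hd
  -- claim A : γ ≤ bary i 0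
  have claimA : ∀ i, γ ≤ bary A σ i 0 := by
    intro i
    set p : EuclideanSpace ℝ (Fin n) := -(γ⁻¹ • gvec A σ i) with hp
    have hpball : p ∈ Metric.closedBall (0 : EuclideanSpace ℝ (Fin n)) 1 := by
      rw [Metric.mem_closedBall, dist_zero_right, hp, norm_neg, norm_smul,
        norm_inv, Real.norm_eq_abs, abs_of_pos hγpos, hnorm i,
        inv_mul_cancel₀ (ne_of_gt hγpos)]
    have hmem : p ∈ convexHull ℝ (Set.range A) := hball hpball
    rw [hhull] at hmem
    have h0 := hmem i
    have hkey : bary A σ i p = bary A σ i 0 - γ := by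
      rw [bary_apply, bary_apply, hp, ← hc]
      have : -(γ⁻¹ • gvec A σ i) - c = (-(γ⁻¹ • gvec A σ i)) + (0 - c) := by abel
      rw [this, inner_add_right, inner_neg_right, real_inner_smul_right, hgg i]
      have : γ⁻¹ * (2*n/(σ*((n:ℝ)+1))) = γ := by
        rw [← hγ2]; field_simp
      rw [this]; ring
    rw [hkey] at h0
    linarith
  -- summing gives (n+1) γ ≤ 1
  have hsum1 : ((n:ℝ)+1) * γ ≤ 1 := by
    have h1 : ∑ i, γ ≤ ∑ i, bary A σ i (0 : EuclideanSpace ℝ (Fin n)) :=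
      Finset.sum_le_sum fun i _ => claimA i
    rw [bary_sum A σ 0, Finset.sum_const, Finset.card_univ, Fintype.card_fin,
      nsmul_eq_mul] at h1
    push_cast at h1
    linarith
  -- claim B : ball of radius ((n+1)γ)⁻¹ at centroid is inside
  have hr0pos : 0 < (((n:ℝ)+1) * γ)⁻¹ := by positivity
  have claimB : Metric.closedBall c (((n:ℝ)+1) * γ)⁻¹ ⊆ convexHull ℝ (Set.range A) := by
    intro x hx
    rw [Metric.mem_closedBall, dist_eq_norm] at hx
    rw [hhull]
    intro i
    rw [bary_apply, ← hc]
    have habs : |(⟪gvec A σ i, x - c⟫ : ℝ)| ≤ γ * (((n:ℝ)+1) * γ)⁻¹ := by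
      calc |(⟪gvec A σ i, x - c⟫ : ℝ)| ≤ ‖gvec A σ i‖ * ‖x - c‖ := abs_real_inner_le_norm _ _
        _ ≤ γ * (((n:ℝ)+1) * γ)⁻¹ := by
            rw [hnorm i]
            exact mul_le_mul_of_nonneg_left hx (le_of_lt hγpos)
    have : γ * (((n:ℝ)+1) * γ)⁻¹ = ((n:ℝ)+1)⁻¹ := by
      field_simp
    rw [this] at habs
    have := abs_le.1 habs
    linarith [this.1]
  have hsum2 : (((n:ℝ)+1) * γ)⁻¹ ≤ 1 := hmax c _ claimB
  have heq : ((n:ℝ)+1) * γ = 1 := by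
    have hpos : 0 < ((n:ℝ)+1) * γ := by positivity
    have h := mul_le_mul_of_nonneg_right hsum2 (le_of_lt hpos)
    rw [inv_mul_cancel₀ (ne_of_gt hpos), one_mul] at h
    linarith
  -- solve for σ
  have hγval : γ = ((n:ℝ)+1)⁻¹ := by
    field_simp at heq ⊢
    linarith
  rw [hγval] at hγ2
  have hσne : σ ≠ 0 := ne_of_gt hσ
  field_simp at hγ2
  nlinarith [hγ2]

def stdCornerE (n : ℕ) : Set (EuclideanSpace ℝ (Fin n)) :=
  {y | (∀ i, 0 ≤ y i) ∧ ∑ i, y i ≤ 1}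

lemma convex_stdCornerE : Convex ℝ (stdCornerE n) := by
  intro x hx y hy a b ha hb hab
  constructor
  · intro i
    have : (a • x + b • y) i = a * x i + b * y i := rfl
    rw [this]
    have := hx.1 i; have := hy.1 i
    positivity
  · have : ∑ i, (a • x + b • y) i = a * ∑ i, x i + b * ∑ i, y i := by
      rw [Finset.mul_sum, Finset.mul_sum, ← Finset.sum_add_distrib]
      rfl
    rw [this]
    nlinarith [hx.2, hy.2]

lemma stdCornerE_eq_hull :
    convexHull ℝ (insert (0 : EuclideanSpace ℝ (Fin n))
      (Set.range fun j : Fin n => (EuclideanSpace.single j (1:ℝ)))) = stdCornerE n := by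
  apply Set.Subset.antisymm
  · apply convexHull_min
    · rintro x (rfl | ⟨j, rfl⟩)
      · exact ⟨fun i => le_refl 0, by norm_num⟩
      · constructor
        · intro i
          show (0:ℝ) ≤ EuclideanSpace.single j (1:ℝ) i
          rw [EuclideanSpace.single_apply]
          split_ifs <;> norm_num
        · show ∑ i, (EuclideanSpace.single j (1:ℝ)) i ≤ 1
          have : ∑ i, (EuclideanSpace.single j (1:ℝ)) i = 1 := by
            simp [EuclideanSpace.single_apply]
          rw [this]
    · exact convex_stdCornerE
  · intro y hy
    -- y = centerMass over Option (Fin n)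
    set w : Option (Fin n) → ℝ := fun o => o.elim (1 - ∑ i, y i) (fun j => y j) with hw
    set z : Option (Fin n) → EuclideanSpace ℝ (Fin n) :=
      fun o => o.elim 0 (fun j => EuclideanSpace.single j (1:ℝ)) with hz
    have hwsum : ∑ o : Option (Fin n), w o = 1 := by
      rw [Fintype.sum_option]
      simp [hw]
    have hcm : Finset.univ.centerMass w z = y := by
      rw [Finset.centerMass_eq_of_sum_1 _ _ hwsum, Fintype.sum_option]
      simp only [hw, hz, Option.elim, smul_zero, zero_add]
      have := (EuclideanSpace.basisFun (Fin n) ℝ).sum_repr y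
      simp only [EuclideanSpace.basisFun_repr, EuclideanSpace.basisFun_apply] at this
      exact this
    rw [← hcm]
    apply Finset.centerMass_mem_convexHull
    · rintro (_ | j) _
      · simpa [hw] using hy.2
      · exact hy.1 j
    · rw [hwsum]; norm_num
    · rintro (_ | j) _
      · exact Set.mem_insert _ _
      · exact Set.mem_insert_of_mem _ ⟨j, rfl⟩

def vertMatrix (A : Fin (n+1) → EuclideanSpace ℝ (Fin n)) : Matrix (Fin n) (Fin n) ℝ :=
  Matrix.of fun k j => (A (Fin.succ j) - A 0) k

def vertLin (A : Fin (n+1) → EuclideanSpace ℝ (Fin n)) :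
    EuclideanSpace ℝ (Fin n) →ₗ[ℝ] EuclideanSpace ℝ (Fin n) :=
  Matrix.toEuclideanLin (vertMatrix A)

lemma vertMatrix_mulVec_single (A : Fin (n+1) → EuclideanSpace ℝ (Fin n)) (j : Fin n) :
    vertLin A (EuclideanSpace.single j (1:ℝ)) = A (Fin.succ j) - A 0 := by
  ext k
  show ((vertMatrix A).mulVec fun l => EuclideanSpace.single j (1:ℝ) l) k = _
  simp only [Matrix.mulVec, dotProduct, EuclideanSpace.single_apply]
  rw [Finset.sum_congr rfl (fun l _ => by
    rw [show (vertMatrix A) k l * (if l = j then (1:ℝ) else 0)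
      = if l = j then (vertMatrix A) k l else 0 by split_ifs <;> ring])]
  rw [Finset.sum_ite_eq' Finset.univ j fun l => (vertMatrix A) k l]
  simp [vertMatrix]

lemma image_simplex (A : Fin (n+1) → EuclideanSpace ℝ (Fin n)) :
    ((vertLin A).toAffineMap
        + AffineMap.const ℝ (EuclideanSpace ℝ (Fin n)) (A 0)) '' (stdCornerE n)
      = convexHull ℝ (Set.range A) := by
  set T := (vertLin A).toAffineMap
      + AffineMap.const ℝ (EuclideanSpace ℝ (Fin n)) (A 0) with hTdef
  have hTapp : ∀ x, T x = vertLin A x + A 0 := fun x => rfl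
  rw [← stdCornerE_eq_hull, AffineMap.image_convexHull]
  congr 1
  rw [Set.image_insert_eq]
  have h0 : T 0 = A 0 := by rw [hTapp, map_zero, zero_add]
  have hrange : T '' (Set.range fun j : Fin n => EuclideanSpace.single j (1:ℝ))
      = Set.range fun j : Fin n => A (Fin.succ j) := by
    rw [← Set.range_comp]
    apply congrArg Set.range
    funext j
    show T (EuclideanSpace.single j (1:ℝ)) = _
    rw [hTapp, vertMatrix_mulVec_single]
    abel
  rw [h0, hrange]
  ext x
  constructor
  · rintro (rfl | ⟨j, rfl⟩)
    · exact ⟨0, rfl⟩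
    · exact ⟨Fin.succ j, rfl⟩
  · rintro ⟨i, rfl⟩
    rcases Fin.eq_zero_or_eq_succ i with rfl | ⟨j, rfl⟩
    · exact Set.mem_insert _ _
    · exact Set.mem_insert_of_mem _ ⟨j, rfl⟩

lemma gram_det (A : Fin (n+1) → EuclideanSpace ℝ (Fin n)) (σ : ℝ)
    (hd : ∀ i j, i ≠ j → ⟪A i - A j, A i - A j⟫ = σ) :
    (vertMatrix A).det ^ 2 = (σ/2)^n * (1 + n) := by
  have hgram : (vertMatrix A).transpose * (vertMatrix A)
      = (σ/2) • (1 + Matrix.replicateCol (Fin 1) (fun _ => (1:ℝ)) * Matrix.replicateRow (Fin 1) (fun _ => (1:ℝ))) := by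
    ext i j
    rw [Matrix.mul_apply]
    have hlhs : ∑ k, (vertMatrix A).transpose i k * (vertMatrix A) k j
        = ⟪A (Fin.succ i) - A 0, A (Fin.succ j) - A 0⟫ := by
      rw [PiLp.inner_apply]
      apply Finset.sum_congr rfl
      intro k _
      simp [vertMatrix, Matrix.transpose_apply, RCLike.inner_apply, mul_comm]
    rw [hlhs]
    have hcr : (Matrix.replicateCol (Fin 1) (fun _ => (1:ℝ))
        * Matrix.replicateRow (Fin 1) (fun _ => (1:ℝ))) i j = 1 := by
      rw [Matrix.mul_apply]
      simp [Matrix.replicateCol_apply, Matrix.replicateRow_apply]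
    rw [Matrix.smul_apply, Matrix.add_apply, hcr, Matrix.one_apply]
    rcases eq_or_ne i j with rfl | hij
    · rw [if_pos rfl]
      rw [hd (Fin.succ i) 0 (Fin.succ_ne_zero i), smul_eq_mul]
      ring
    · rw [if_neg hij]
      have h1 : A (Fin.succ i) - A 0 = -(A 0 - A (Fin.succ i)) := by abel
      have h2 : A (Fin.succ j) - A 0 = -(A 0 - A (Fin.succ j)) := by abel
      rw [h1, h2, inner_neg_neg,
        reg_inner A σ hd (Fin.succ_ne_zero i).symm (Fin.succ_ne_zero j).symm
          (fun h => hij (Fin.succ_injective n h)), smul_eq_mul]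
      ring
  have hdet2 : (vertMatrix A).det ^ 2 = ((vertMatrix A).transpose * (vertMatrix A)).det := by
    rw [Matrix.det_mul, Matrix.det_transpose, sq]
  rw [hdet2, hgram, Matrix.det_smul]
  erw [Matrix.det_one_add_replicateCol_mul_replicateRow]
  rw [Fintype.card_fin]
  simp [dotProduct]

/-- The volume of a regular n-simplex whose inscribed ball is the unit
ball equals √(nⁿ(n+1)^{n+1}) / n!. -/
theorem regular_simplex_volume (n : ℕ) (hn : 1 ≤ n)
    (A : Fin (n + 1) → EuclideanSpace ℝ (Fin n))
    (hA : AffineIndependent ℝ A)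
    (hreg : ∀ i j k l, i ≠ j → k ≠ l → dist (A i) (A j) = dist (A k) (A l))
    (hball : Metric.closedBall 0 1 ⊆ convexHull ℝ (Set.range A))
    (hmax : ∀ (z : EuclideanSpace ℝ (Fin n)) (r : ℝ),
      Metric.closedBall z r ⊆ convexHull ℝ (Set.range A) → r ≤ 1) :
    volume (convexHull ℝ (Set.range A)) =
      ENNReal.ofReal (Real.sqrt ((n : ℝ) ^ n * ((n : ℝ) + 1) ^ (n + 1)) / n.factorial) := by
  have h01 : (0 : Fin (n+1)) ≠ 1 := by
    intro h
    have hv := congrArg Fin.val h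
    rw [Fin.val_zero, Fin.val_one', Nat.mod_eq_of_lt (by omega)] at hv
    exact absurd hv (by omega)
  set σ := dist (A 0) (A 1) ^ 2 with hσdef
  have hd : ∀ i j, i ≠ j → ⟪A i - A j, A i - A j⟫ = σ := by
    intro i j hij
    rw [real_inner_self_eq_norm_sq, ← dist_eq_norm, hreg i j 0 1 hij h01]
  have hσpos : 0 < σ := by
    have hne : A 0 ≠ A 1 := hA.injective.ne h01
    have := dist_pos.2 hne
    positivity
  have hσ : σ = 2 * n * ((n:ℝ) + 1) := sigma_eq hn A hA σ hσpos hd hball hmax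
  rw [← image_simplex A]
  have hTL : ⇑((vertLin A).toAffineMap
        + AffineMap.const ℝ (EuclideanSpace ℝ (Fin n)) (A 0)) '' (stdCornerE n)
      = (fun z => A 0 + z) '' (⇑(vertLin A) '' stdCornerE n) := by
    rw [Set.image_image]
    apply congrArg (· '' stdCornerE n)
    funext x
    show vertLin A x + A 0 = A 0 + vertLin A x
    abel
  rw [hTL]
  have hvadd : (fun z => A 0 + z) '' (⇑(vertLin A) '' stdCornerE n)
      = A 0 +ᵥ (⇑(vertLin A) '' stdCornerE n) := rfl
  rw [hvadd, measure_vadd, Measure.addHaar_image_linearMap]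
  have hms : MeasurableSet (stdCornerE n) :=
    (PiLp.volume_preserving_ofLp (Fin n)).measurable (measurableSet_corner n 1)
  have hvol : volume (stdCornerE n) = ENNReal.ofReal (1 / n.factorial) := by
    rw [volume_euclidean_eq _ hms]
    have hid : ((WithLp.toLp 2 : (Fin n → ℝ) → EuclideanSpace ℝ (Fin n)) ⁻¹' stdCornerE n) = corner n 1 := rfl
    rw [hid, volume_corner n 1 zero_le_one, one_pow]
  have hdetL : LinearMap.det (vertLin A) = (vertMatrix A).det := by
    rw [vertLin, Matrix.toEuclideanLin_eq_toLin_orthonormal]; exact LinearMap.det_toLin _ _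
  have hdet2 : (vertMatrix A).det ^ 2 = (n:ℝ)^n * ((n:ℝ)+1)^(n+1) := by
    rw [gram_det A σ hd, hσ]
    have h2 : (2 * (n:ℝ) * ((n:ℝ)+1)) / 2 = (n:ℝ) * ((n:ℝ)+1) := by ring
    rw [h2, mul_pow, pow_succ]
    ring
  have habs : |LinearMap.det (vertLin A)| = Real.sqrt ((n:ℝ)^n * ((n:ℝ)+1)^(n+1)) := by
    rw [hdetL, ← hdet2, Real.sqrt_sq_eq_abs]
  rw [hvol, habs, ← ENNReal.ofReal_mul (Real.sqrt_nonneg _), mul_one_div]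

end
end
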